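/- arXiv:1707.06591 — 8 statements merged into one kernel-verified Lean document; each statement's English description precedes it below -/
import Mathlib

section
/- In an integro-differential algebra (F, ∂, ∫) (satisfying the strong Rota-Baxter axiom), the induced evaluation e := id − ∫∘∂ is multiplicative: e(fg) = e(f)·e(g) for all f, g ∈ F. -/
/-- In an integro-differential algebra (strong Rota-Baxter axiom), the induced evaluation
`e := id − ∫∘∂` is multiplicative: `e(fg) = e(f)·e(g)`. -/
theorem induced_evaluation_multiplicative {K F : Type*} [CommRing K] [CommRing F] [Algebra K F]
    (d I : F →ₗ[K] F)
    (hLeib : ∀ f g : F, d (f * g) = d f * g + f * d g)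
    (hsec : ∀ f : F, d (I f) = f)
    (hstrong : ∀ f g : F, f * I g = I (f * g) + I (d f * I g)) :
    ∀ f g : F, (f * g - I (d (f * g))) = (f - I (d f)) * (g - I (d g)) := by
  intro f g
  have h1 := hstrong f (d g)
  have h2 := hstrong g (d f)
  have h3 := hstrong (I (d f)) (d g)
  rw [hsec] at h3
  rw [hLeib, map_add]
  linear_combination h1 + h2 - h3 + congrArg I (mul_comm (d g) (I (d f)))
    + congrArg I (mul_comm g (d f))
end

section
/- An ordinary differential Rota-Baxter algebra is automatically an integro-differential algebra: if (F, ∂, ∫) is a differential Rota-Baxter algebra over a field K with ker ∂ = K·1, then the strong Rota-Baxter axiom f·∫g = ∫(fg) + ∫((∂f)·∫g) holds for all f, g ∈ F. -/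
/-- An ordinary differential Rota-Baxter algebra over a field is automatically an
integro-differential algebra: the strong Rota-Baxter axiom holds. -/
theorem ordinary_drb_is_integro_differential {K F : Type*} [Field K] [CommRing F] [Algebra K F]
    (d I : F →ₗ[K] F)
    (hLeib : ∀ f g : F, d (f * g) = d f * g + f * d g)
    (hsec : ∀ f : F, d (I f) = f)
    (hweak : ∀ f g : F, I f * I g = I (f * I g) + I (g * I f))
    (hord : ∀ f : F, d f = 0 → ∃ c : K, f = algebraMap K F c) :
    ∀ f g : F, f * I g = I (f * g) + I (d f * I g) := by
  intro f g
  obtain ⟨c, hc⟩ : ∃ c : K, f - I (d f) = algebraMap K F c := by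
    apply hord
    rw [map_sub, hsec]
    simp
  have h1 : I (d f) = f - algebraMap K F c := by rw [← hc]; ring
  have hsm : ∀ x : F, algebraMap K F c * x = c • x := fun x => (Algebra.smul_def c x).symm
  calc f * I g = I (d f) * I g + algebraMap K F c * I g := by rw [h1]; ring
    _ = (I (d f * I g) + I (g * I (d f))) + I (algebraMap K F c * g) := by
        rw [hweak, hsm, hsm, map_smul]
    _ = I (d f * I g) + I (g * (f - algebraMap K F c)) + I (algebraMap K F c * g) := by
        rw [h1]
    _ = I (f * g) + I (d f * I g) := by
        rw [show g * (f - algebraMap K F c) = f * g - algebraMap K F c * g by ring, map_sub]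
        ring
end

section
/- In a shifted Rota-Baxter algebra over an ordered field, the generic identities ∫_{s⁺} = ∫ + H(s)·∫_s^0 and ∫_{s⁻} = ∫ + H̄(s)·∫_s^0 hold, as well as ∫_{s⁺}^0 = H(s)·∫_s^0 and ∫_{s⁻}^0 = H̄(s)·∫_s^0, for every s ∈ K. -/
/-- Shifted Rota-Baxter operator `∫_c f := ∫f − e_c(∫f)·1`. -/
noncomputable def shiftedInt {K F : Type*} [Field K] [LinearOrder K] [IsStrictOrderedRing K] [CommRing F] [Algebra K F]
    (I : F →ₗ[K] F) (e : F →ₐ[K] K) (S : K → F ≃ₐ[K] F) (c : K) (f : F) : F :=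
  I f - algebraMap K F (e (S c (I f)))

/-- Definite integral `∫_c^d f := e_d(∫_c f)`. -/
noncomputable def defInt {K F : Type*} [Field K] [LinearOrder K] [IsStrictOrderedRing K] [CommRing F] [Algebra K F]
    (I : F →ₗ[K] F) (e : F →ₐ[K] K) (S : K → F ≃ₐ[K] F) (c d : K) (f : F) : K :=
  e (S d (shiftedInt I e S c f))

/-- The left-continuous Heaviside operator. -/
noncomputable def Heav {K : Type*} [Field K] [LinearOrder K] [IsStrictOrderedRing K] (s : K) : K :=
  if 0 < s then 1 else 0

/-- Generic identities in a shifted Rota-Baxter algebra over an ordered field: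
`∫_{s⁺} = ∫ + H(s)·∫_s^0`, `∫_{s⁻} = ∫ + H̄(s)·∫_s^0`, `∫_{s⁺}^0 = H(s)·∫_s^0`,
`∫_{s⁻}^0 = H̄(s)·∫_s^0`. -/
theorem generic_heaviside_identities {K F : Type*} [Field K] [LinearOrder K] [IsStrictOrderedRing K] [CommRing F]
    [Algebra K F]
    (I : F →ₗ[K] F)
    (hRB : ∀ f g : F, I f * I g = I (f * I g) + I (g * I f))
    (e : F →ₐ[K] K) (heI : ∀ f : F, e (I f) = 0)
    (S : K → F ≃ₐ[K] F)
    (hSadd : ∀ a b : K, ∀ f : F, S (a + b) f = S a (S b f))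
    (hS0 : ∀ f : F, S 0 f = f)
    (hcomp : ∀ (c : K) (f : F),
      S c (I f) - I (S c f) = algebraMap K F (e (S c (I f)))) :
    (∀ (s : K) (f : F), shiftedInt I e S (max s 0) f
        = I f + algebraMap K F (Heav s * defInt I e S s 0 f)) ∧
    (∀ (s : K) (f : F), shiftedInt I e S (min s 0) f
        = I f + algebraMap K F ((1 - Heav s) * defInt I e S s 0 f)) ∧
    (∀ (s : K) (f : F), defInt I e S (max s 0) 0 f = Heav s * defInt I e S s 0 f) ∧
    (∀ (s : K) (f : F), defInt I e S (min s 0) 0 f = (1 - Heav s) * defInt I e S s 0 f) := by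
  have hdef : ∀ (c : K) (f : F), defInt I e S c 0 f = - e (S c (I f)) := by
    intro c f
    simp [defInt, shiftedInt, hS0, heI]
  have hshift : ∀ (c : K) (f : F),
      shiftedInt I e S c f = I f + algebraMap K F (defInt I e S c 0 f) := by
    intro c f
    simp [shiftedInt, hdef, sub_eq_add_neg]
  have hzero : ∀ f : F, defInt I e S 0 0 f = 0 := by
    intro f; simp [hdef, hS0, heI]
  refine ⟨?_, ?_, ?_, ?_⟩ <;> intro s f <;> rcases lt_or_ge 0 s with hs | hs <;>
    first
    | simp [Heav, hs, max_eq_left hs.le, min_eq_right hs.le, hshift, hzero]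
    | simp [Heav, hs.not_gt, max_eq_right hs, min_eq_left hs, hshift, hzero]
end

section
/- The piecewise extension P(F) = F[K_⊔], the monoid algebra of (K, max) over F, satisfies the exchange law H_{a⊔b} + H_{a⊓b} = H_a + H_b for its generators, and the map H_a ↦ 1 − H̄_a extends to an F-algebra isomorphism F[K_⊔] ≅ F[K_⊓]. -/
/-- The semigroup `(K, max)` unitarized: `WithBot K` under `⊔` with identity `⊥`. -/
def SupMon (K : Type*) := WithBot K

instance SupMon.instCommMonoid {K : Type*} [LinearOrder K] : CommMonoid (SupMon K) where
  mul a b := show WithBot K from (show WithBot K from a) ⊔ (show WithBot K from b)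
  one := show WithBot K from ⊥
  mul_assoc a b c := sup_assoc (α := WithBot K) a b c
  one_mul a := bot_sup_eq (α := WithBot K) a
  mul_one a := sup_bot_eq (α := WithBot K) a
  mul_comm a b := sup_comm (α := WithBot K) a b

/-- The canonical inclusion `K → SupMon K`. -/
def SupMon.up {K : Type*} (a : K) : SupMon K := (a : WithBot K)

/-- The semigroup `(K, min)` unitarized: `WithTop K` under `⊓` with identity `⊤`. -/
def InfMon (K : Type*) := WithTop K

instance InfMon.instCommMonoid {K : Type*} [LinearOrder K] : CommMonoid (InfMon K) where
  mul a b := show WithTop K from (show WithTop K from a) ⊓ (show WithTop K from b)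
  one := show WithTop K from ⊤
  mul_assoc a b c := inf_assoc (α := WithTop K) a b c
  one_mul a := top_inf_eq (α := WithTop K) a
  mul_one a := inf_top_eq (α := WithTop K) a
  mul_comm a b := inf_comm (α := WithTop K) a b

/-- The canonical inclusion `K → InfMon K`. -/
def InfMon.up {K : Type*} (a : K) : InfMon K := (a : WithTop K)

/-- The generator `H_a` of the piecewise extension `P(F) = F[K_⊔]`. -/
noncomputable def Hsup (F : Type*) {K : Type*} [CommRing F] [LinearOrder K] (a : K) :
    MonoidAlgebra F (SupMon K) :=
  MonoidAlgebra.of F (SupMon K) (SupMon.up a)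

/-- The generator `H̄_a` of the dual piecewise extension `F[K_⊓]`. -/
noncomputable def Hinf (F : Type*) {K : Type*} [CommRing F] [LinearOrder K] (a : K) :
    MonoidAlgebra F (InfMon K) :=
  MonoidAlgebra.of F (InfMon K) (InfMon.up a)

section Aux

variable {K : Type*} (F : Type*) [LinearOrder K] [CommRing F]

lemma SupMon.up_mul (a b : K) : SupMon.up a * SupMon.up b = SupMon.up (max a b) := by
  show ((a : WithBot K) ⊔ (b : WithBot K)) = ((max a b : K) : WithBot K)
  simp [WithBot.coe_max]

lemma InfMon.up_mul (a b : K) : InfMon.up a * InfMon.up b = InfMon.up (min a b) := by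
  show ((a : WithTop K) ⊓ (b : WithTop K)) = ((min a b : K) : WithTop K)
  simp [WithTop.coe_min]

lemma Hsup_mul (a b : K) : Hsup F a * Hsup F b = Hsup F (max a b) := by
  unfold Hsup; rw [← map_mul, SupMon.up_mul]

lemma Hinf_mul (a b : K) : Hinf F a * Hinf F b = Hinf F (min a b) := by
  unfold Hinf; rw [← map_mul, InfMon.up_mul]

lemma Hsup_exchange (a b : K) :
    Hsup F (max a b) + Hsup F (min a b) = Hsup F a + Hsup F b := by
  rcases le_total a b with h | h
  · rw [max_eq_right h, min_eq_left h, add_comm]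
  · rw [max_eq_left h, min_eq_right h]

lemma Hinf_exchange (a b : K) :
    Hinf F (max a b) + Hinf F (min a b) = Hinf F a + Hinf F b := by
  rcases le_total a b with h | h
  · rw [max_eq_right h, min_eq_left h, add_comm]
  · rw [max_eq_left h, min_eq_right h]

noncomputable def psiFun (x : WithBot K) : MonoidAlgebra F (InfMon K) :=
  x.recBotCoe 1 (fun a => 1 - Hinf F a)

lemma psiFun_sup (x y : WithBot K) :
    psiFun F (x ⊔ y) = psiFun F x * psiFun F y := by
  induction x using WithBot.recBotCoe with
  | bot => simp [psiFun]
  | coe a =>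
    induction y using WithBot.recBotCoe with
    | bot => simp [psiFun]
    | coe b =>
      show psiFun F ((max a b : K) : WithBot K) = _
      show 1 - Hinf F (max a b) = (1 - Hinf F a) * (1 - Hinf F b)
      have h1 := Hinf_mul F a b
      have h2 := Hinf_exchange F a b
      linear_combination -h2 - h1

lemma chiFun_aux (x y : WithBot K) : psiFun F (x ⊔ y) = psiFun F x * psiFun F y :=
  psiFun_sup F x y

noncomputable def phiFun (x : WithTop K) : MonoidAlgebra F (SupMon K) :=
  x.recTopCoe 1 (fun a => 1 - Hsup F a)

lemma phiFun_inf (x y : WithTop K) :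
    phiFun F (x ⊓ y) = phiFun F x * phiFun F y := by
  induction x using WithTop.recTopCoe with
  | top => simp [phiFun]
  | coe a =>
    induction y using WithTop.recTopCoe with
    | top => simp [phiFun]
    | coe b =>
      show phiFun F ((min a b : K) : WithTop K) = _
      show 1 - Hsup F (min a b) = (1 - Hsup F a) * (1 - Hsup F b)
      have h1 := Hsup_mul F a b
      have h2 := Hsup_exchange F a b
      linear_combination -h2 - h1

noncomputable def psiHom : SupMon K →* MonoidAlgebra F (InfMon K) where
  toFun x := psiFun F (show WithBot K from x)
  map_one' := rfl
  map_mul' x y := psiFun_sup F x y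

noncomputable def phiHom : InfMon K →* MonoidAlgebra F (SupMon K) where
  toFun x := phiFun F (show WithTop K from x)
  map_one' := rfl
  map_mul' x y := phiFun_inf F x y

noncomputable def dualA : MonoidAlgebra F (SupMon K) →ₐ[F] MonoidAlgebra F (InfMon K) :=
  MonoidAlgebra.lift F _ (SupMon K) (psiHom F)

noncomputable def dualB : MonoidAlgebra F (InfMon K) →ₐ[F] MonoidAlgebra F (SupMon K) :=
  MonoidAlgebra.lift F _ (InfMon K) (phiHom F)

lemma dualA_Hsup (a : K) : dualA F (Hsup F a) = 1 - Hinf F a := by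
  unfold dualA Hsup; rw [MonoidAlgebra.lift_of]; rfl

lemma dualB_Hinf (a : K) : dualB F (Hinf F a) = 1 - Hsup F a := by
  unfold dualB Hinf; rw [MonoidAlgebra.lift_of]; rfl

noncomputable def dualEquiv : MonoidAlgebra F (SupMon K) ≃ₐ[F] MonoidAlgebra F (InfMon K) :=
  AlgEquiv.ofAlgHom (dualA F) (dualB F)
    (by
      refine MonoidAlgebra.algHom_ext ?_ (Subsingleton.elim _ _)
      intro m
      induction m using WithTop.recTopCoe with
      | top =>
        have h : MonoidAlgebra.single ((⊤ : WithTop K) : InfMon K) (1 : F)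
            = (1 : MonoidAlgebra F (InfMon K)) := map_one (MonoidAlgebra.of F (InfMon K))
        show ((dualA F).comp (dualB F)) 1 = (AlgHom.id F _) 1
        simp
      | coe a =>
        simp only [AlgHom.coe_comp, Function.comp_apply, AlgHom.id_apply]
        show dualA F (dualB F (Hinf F a)) = Hinf F a
        rw [dualB_Hinf, map_sub, map_one, dualA_Hsup]
        ring)
    (by
      refine MonoidAlgebra.algHom_ext ?_ (Subsingleton.elim _ _)
      intro m
      induction m using WithBot.recBotCoe with
      | bot =>
        have h : MonoidAlgebra.single ((⊥ : WithBot K) : SupMon K) (1 : F)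
            = (1 : MonoidAlgebra F (SupMon K)) := map_one (MonoidAlgebra.of F (SupMon K))
        show ((dualB F).comp (dualA F)) 1 = (AlgHom.id F _) 1
        simp
      | coe a =>
        simp only [AlgHom.coe_comp, Function.comp_apply, AlgHom.id_apply]
        show dualB F (dualA F (Hsup F a)) = Hsup F a
        rw [dualA_Hsup, map_sub, map_one, dualB_Hinf]
        ring)

end Aux

/-- The piecewise extension `P(F) = F[K_⊔]` satisfies the exchange law
`H_{a⊔b} + H_{a⊓b} = H_a + H_b`, and `H_a ↦ 1 − H̄_a` extends to an `F`-algebra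
isomorphism `F[K_⊔] ≅ F[K_⊓]`. -/
theorem piecewise_extension_exchange_and_duality
    {K F : Type*} [Field K] [LinearOrder K] [IsStrictOrderedRing K] [CommRing F] [Algebra K F] :
    (∀ a b : K, Hsup F (max a b) + Hsup F (min a b) = Hsup F a + Hsup F b) ∧
    ∃ φ : MonoidAlgebra F (SupMon K) ≃ₐ[F] MonoidAlgebra F (InfMon K),
      ∀ a : K, φ (Hsup F a) = 1 - Hinf F a := by
  refine ⟨Hsup_exchange F, dualEquiv F, fun a => ?_⟩
  show dualA F (Hsup F a) = 1 - Hinf F a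
  exact dualA_Hsup F a
end

section
/- With the Rota-Baxter operator of the piecewise extension, the alternative formula ∫(f H̄_a) = (∫_{a⁻} f)·H̄_a − (∫_{a⁺}^0 f)·H_a holds, equivalently ∫(f H_a) = (∫_a f)·H_a + H̄(a)·(∫_0^a f)·1. -/
/-- The left-continuous dual Heaviside operator: `H̄(a) = 1` for `a ≤ 0`, else `0`. -/
noncomputable def HbarOp {K : Type*} [Field K] [LinearOrder K] [IsStrictOrderedRing K] (a : K) : K :=
  if a ≤ 0 then 1 else 0

/-- With the Rota-Baxter operator of the piecewise extension, the alternative formulas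
`∫(f H̄_a) = (∫_{a⁻} f)·H̄_a − (∫_{a⁺}^0 f)·H_a` and
`∫(f H_a) = (∫_a f)·H_a + H̄(a)·(∫_0^a f)·1` hold. -/
theorem piecewise_extension_rb_alternative_formulas
        {K F : Type*} [Field K] [LinearOrder K] [IsStrictOrderedRing K] [CommRing F] [Algebra K F]
    (I : F →ₗ[K] F)
    (hRB : ∀ f g : F, I f * I g = I (f * I g) + I (g * I f))
    (e : F →ₐ[K] K) (heI : ∀ f : F, e (I f) = 0)
    (S : K → F ≃ₐ[K] F)
    (hSadd : ∀ a b : K, ∀ f : F, S (a + b) f = S a (S b f))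
    (hS0 : ∀ f : F, S 0 f = f)
    (hcomp : ∀ (c : K) (f : F),
      S c (I f) - I (S c f) = algebraMap K F (e (S c (I f))))
    (hinj : Function.Injective I)
    (hdirect_sup : LinearMap.range I ⊔ Submodule.span K {(1 : F)} = ⊤)
    (hdirect_inf : LinearMap.range I ⊓ Submodule.span K {(1 : F)} = ⊥)
    (J : MonoidAlgebra F (SupMon K) →ₗ[K] MonoidAlgebra F (SupMon K))
    (hJone : ∀ f : F,
      J (MonoidAlgebra.single (1 : SupMon K) f) = MonoidAlgebra.single (1 : SupMon K) (I f))
    (hJH : ∀ (a : K) (f : F),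
      J (MonoidAlgebra.single (SupMon.up a) f)
        = MonoidAlgebra.single (SupMon.up a) (shiftedInt I e S (max a 0) f)
          - defInt I e S (min a 0) 0 f •
              ((1 : MonoidAlgebra F (SupMon K))
                - MonoidAlgebra.single (SupMon.up a) (1 : F))) :
    (∀ (a : K) (f : F),
      J (MonoidAlgebra.single (1 : SupMon K) f - MonoidAlgebra.single (SupMon.up a) f)
        = (MonoidAlgebra.single (1 : SupMon K) (shiftedInt I e S (min a 0) f)
            - MonoidAlgebra.single (SupMon.up a) (shiftedInt I e S (min a 0) f))
          - defInt I e S (max a 0) 0 f • MonoidAlgebra.single (SupMon.up a) (1 : F)) ∧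
    (∀ (a : K) (f : F),
      J (MonoidAlgebra.single (SupMon.up a) f)
        = MonoidAlgebra.single (SupMon.up a) (shiftedInt I e S a f)
          + (HbarOp a * defInt I e S 0 a f) • (1 : MonoidAlgebra F (SupMon K))) := by
  classical
  have hne : ∀ a : K, (1 : SupMon K) ≠ SupMon.up a := by
    intro a h
    exact WithBot.coe_ne_bot (h.symm : (a : WithBot K) = (⊥ : WithBot K))
  have subap : ∀ (p q : MonoidAlgebra F (SupMon K)) (z : SupMon K), (p - q).coeff z = p.coeff z - q.coeff z :=
    fun _ _ _ => rfl
  have addap : ∀ (p q : MonoidAlgebra F (SupMon K)) (z : SupMon K), (p + q).coeff z = p.coeff z + q.coeff z :=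
    fun _ _ _ => rfl
  have smulsingle : ∀ (c : K) (m : SupMon K) (v : F),
      c • (MonoidAlgebra.single m v : MonoidAlgebra F (SupMon K))
        = MonoidAlgebra.single m (c • v) :=
    fun c m v => MonoidAlgebra.smul_single c m v
  have hd0 : ∀ (c : K) (f : F), defInt I e S c 0 f = - e (S c (I f)) := by
    intro c f
    simp [defInt, shiftedInt, hS0, heI]
  have hd0' : ∀ (a : K) (f : F), defInt I e S 0 a f = e (S a (I f)) := by
    intro a f
    simp [defInt, shiftedInt, hS0, heI]
  constructor
  · intro a f
    rw [map_sub, hJone, hJH]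
    ext x
    simp only [MonoidAlgebra.one_def, smul_sub, smulsingle, subap, addap,
      MonoidAlgebra.single_apply]
    split_ifs with h1 h2 h2
    · exact (hne a (h1.trans h2.symm)).elim
    · -- x = up a
      simp only [shiftedInt, hd0, Algebra.smul_def, map_neg, mul_one]
      ring
    · -- x = 1
      simp only [shiftedInt, hd0, Algebra.smul_def, map_neg, mul_one]
      ring
    · simp
  · intro a f
    rw [hJH]
    ext x
    simp only [MonoidAlgebra.one_def, smul_sub, smulsingle, subap, addap,
      MonoidAlgebra.single_apply]
    split_ifs with h1 h2 h2
    · exact (hne a (h2.trans h1.symm)).elim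
    · -- x = up a
      rcases le_or_gt a 0 with ha | ha
      · simp only [shiftedInt, hd0, max_eq_right ha, min_eq_left ha, hS0, heI,
          Algebra.smul_def, map_neg, map_zero, mul_one]
        ring
      · simp only [shiftedInt, hd0, max_eq_left ha.le, min_eq_right ha.le, hS0, heI,
          Algebra.smul_def, map_neg, map_zero, mul_one]
        ring
    · -- x = 1
      rcases le_or_gt a 0 with ha | ha
      · simp only [hd0, hd0', HbarOp, if_pos ha, min_eq_left ha, one_mul,
          Algebra.smul_def, map_neg, mul_one]
        ring
      · simp only [hd0, hd0', HbarOp, if_neg (not_le.mpr ha), min_eq_right ha.le, hS0, heI,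
          zero_mul, Algebra.smul_def, map_neg, map_zero, mul_one]
        ring
    · simp
end

section
/- The differential Rota-Baxter algebra (P(F), ∂, ∫) obtained by extending the derivation by ∂H_a = 0 is not an integro-differential algebra: its induced pseudo-evaluation ê := id − ∫∘∂ fails to be multiplicative. Concretely, in the piecewise extension of any ordinary shifted differential Rota-Baxter algebra F over an ordered field K containing the polynomials, ê(x H_1 · x H_2) = 4 H_2 while ê(x H_1)·ê(x H_2) = 2 H_2, where x = ∫1. -/
lemma SupMon.up_mul_up {K : Type*} [LinearOrder K] (a b : K) :
    SupMon.up a * SupMon.up b = SupMon.up (a ⊔ b) := by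
  show ((a : WithBot K) ⊔ (b : WithBot K)) = ((a ⊔ b : K) : WithBot K)
  exact (WithBot.coe_sup a b).symm

/-- The piecewise extension of an ordinary shifted differential Rota-Baxter algebra
(with the derivation extended by `∂H_a = 0`) is not an integro-differential algebra:
the induced pseudo-evaluation `ê := id − ∫∘∂` fails to be multiplicative. Concretely,
`ê(x H_1 · x H_2) = 4 H_2` while `ê(x H_1)·ê(x H_2) = 2 H_2`, where `x = ∫1`. -/
theorem pseudo_evaluation_not_multiplicative
    {K F : Type*} [Field K] [LinearOrder K] [IsStrictOrderedRing K] [CommRing F] [Algebra K F] [Nontrivial F]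
    (d I : F →ₗ[K] F)
    (hLeib : ∀ f g : F, d (f * g) = d f * g + f * d g)
    (hsec : ∀ f : F, d (I f) = f)
    (hRB : ∀ f g : F, I f * I g = I (f * I g) + I (g * I f))
    (hord : LinearMap.ker d = Submodule.span K {(1 : F)})
    (e : F →ₐ[K] K) (heI : ∀ f : F, e (I f) = 0)
    (S : K → F ≃ₐ[K] F)
    (hSadd : ∀ a b : K, ∀ f : F, S (a + b) f = S a (S b f))
    (hS0 : ∀ f : F, S 0 f = f)
    (hSd : ∀ (c : K) (f : F), S c (d f) = d (S c f))
    (hcomp : ∀ (c : K) (f : F),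
      S c (I f) - I (S c f) = algebraMap K F (e (S c (I f))))
    (hx : ∀ c : K, e (S c (I 1)) = c)
    (J D : MonoidAlgebra F (SupMon K) →ₗ[K] MonoidAlgebra F (SupMon K))
    (hJone : ∀ f : F,
      J (MonoidAlgebra.single (1 : SupMon K) f) = MonoidAlgebra.single (1 : SupMon K) (I f))
    (hJH : ∀ (a : K) (f : F),
      J (MonoidAlgebra.single (SupMon.up a) f)
        = MonoidAlgebra.single (SupMon.up a) (shiftedInt I e S (max a 0) f)
          - defInt I e S (min a 0) 0 f •
              ((1 : MonoidAlgebra F (SupMon K))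
                - MonoidAlgebra.single (SupMon.up a) (1 : F)))
    (hDone : ∀ f : F,
      D (MonoidAlgebra.single (1 : SupMon K) f) = MonoidAlgebra.single (1 : SupMon K) (d f))
    (hDH : ∀ (a : K) (f : F),
      D (MonoidAlgebra.single (SupMon.up a) f) = MonoidAlgebra.single (SupMon.up a) (d f)) :
    (MonoidAlgebra.single (SupMon.up (1 : K)) (I 1)
        * MonoidAlgebra.single (SupMon.up (2 : K)) (I 1)
      - J (D (MonoidAlgebra.single (SupMon.up (1 : K)) (I 1)
        * MonoidAlgebra.single (SupMon.up (2 : K)) (I 1))))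
      = (4 : K) • MonoidAlgebra.single (SupMon.up (2 : K)) (1 : F) ∧
    (MonoidAlgebra.single (SupMon.up (1 : K)) (I 1)
        - J (D (MonoidAlgebra.single (SupMon.up (1 : K)) (I 1))))
      * (MonoidAlgebra.single (SupMon.up (2 : K)) (I 1)
        - J (D (MonoidAlgebra.single (SupMon.up (2 : K)) (I 1))))
      = (2 : K) • MonoidAlgebra.single (SupMon.up (2 : K)) (1 : F) ∧
    (MonoidAlgebra.single (SupMon.up (1 : K)) (I 1)
        * MonoidAlgebra.single (SupMon.up (2 : K)) (I 1)
      - J (D (MonoidAlgebra.single (SupMon.up (1 : K)) (I 1)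
        * MonoidAlgebra.single (SupMon.up (2 : K)) (I 1))))
    ≠ (MonoidAlgebra.single (SupMon.up (1 : K)) (I 1)
        - J (D (MonoidAlgebra.single (SupMon.up (1 : K)) (I 1))))
      * (MonoidAlgebra.single (SupMon.up (2 : K)) (I 1)
        - J (D (MonoidAlgebra.single (SupMon.up (2 : K)) (I 1)))) := by
  -- basic facts in F
  set x : F := I 1 with hxdef
  have hIadd : ∀ f g : F, I (f + g) = I f + I g := fun f g => map_add I f g
  have hdx : d x = 1 := hsec 1
  have hIxx : I (x + x) = x * x := by
    have h := hRB 1 1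
    simp only [one_mul, ← hxdef] at h
    rw [hIadd, h]
  have hdxx : d (x * x) = x + x := by
    rw [hLeib, hdx, one_mul, mul_one]
  -- evaluations
  have heSx : ∀ c : K, e (S c x) = c := hx
  have heSxx : ∀ c : K, e (S c (x * x)) = c * c := by
    intro c; rw [map_mul (S c), map_mul e, heSx]
  -- defInt (min a 0) 0 vanishes for a ≥ 0
  have hdef0 : ∀ f : F, defInt I e S 0 0 f = 0 := by
    intro f
    simp only [defInt, shiftedInt, hS0, map_sub, heI, AlgHom.commutes, Algebra.algebraMap_self,
      RingHom.id_apply, sub_self]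
  -- shiftedInt computations
  have hshift2 : shiftedInt I e S 2 (x + x) = x * x - algebraMap K F 4 := by
    simp only [shiftedInt, hIxx, heSxx]; norm_num
  have hshift1x : shiftedInt I e S 1 (1 : F) = x - algebraMap K F 1 := by
    simp only [shiftedInt, ← hxdef, heSx]
  have hshift2x : shiftedInt I e S 2 (1 : F) = x - algebraMap K F 2 := by
    simp only [shiftedInt, ← hxdef, heSx]
  -- max/min simplifications
  have hmax1 : max (1 : K) 0 = 1 := max_eq_left zero_le_one
  have hmax2 : max (2 : K) 0 = 2 := max_eq_left (by norm_num)
  have hmin1 : min (1 : K) 0 = 0 := min_eq_right zero_le_one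
  have hmin2 : min (2 : K) 0 = 0 := min_eq_right (by norm_num)
  -- the product xH1 * xH2
  have hsup12 : (1 : K) ⊔ (2 : K) = 2 := max_eq_right (by norm_num)
  have hprod : MonoidAlgebra.single (SupMon.up (1 : K)) x
      * MonoidAlgebra.single (SupMon.up (2 : K)) x
      = MonoidAlgebra.single (SupMon.up (2 : K)) (x * x) := by
    rw [MonoidAlgebra.single_mul_single, SupMon.up_mul_up, hsup12]
  -- first pseudo-evaluation
  have hE1 : MonoidAlgebra.single (SupMon.up (1 : K)) x
        * MonoidAlgebra.single (SupMon.up (2 : K)) x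
      - J (D (MonoidAlgebra.single (SupMon.up (1 : K)) x
        * MonoidAlgebra.single (SupMon.up (2 : K)) x))
      = (4 : K) • MonoidAlgebra.single (SupMon.up (2 : K)) (1 : F) := by
    rw [hprod, hDH, hdxx, hJH, hmax2, hmin2, hdef0, hshift2, zero_smul, sub_zero,
      ← MonoidAlgebra.single_sub, MonoidAlgebra.smul_single]
    congr 1
    rw [Algebra.smul_def, mul_one]
    ring
  -- second pseudo-evaluation
  have hE2a : MonoidAlgebra.single (SupMon.up (1 : K)) x
      - J (D (MonoidAlgebra.single (SupMon.up (1 : K)) x))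
      = MonoidAlgebra.single (SupMon.up (1 : K)) (algebraMap K F 1) := by
    rw [hDH, hdx, hJH, hmax1, hmin1, hdef0, hshift1x, zero_smul, sub_zero,
      ← MonoidAlgebra.single_sub]
    congr 1; ring
  have hE2b : MonoidAlgebra.single (SupMon.up (2 : K)) x
      - J (D (MonoidAlgebra.single (SupMon.up (2 : K)) x))
      = MonoidAlgebra.single (SupMon.up (2 : K)) (algebraMap K F 2) := by
    rw [hDH, hdx, hJH, hmax2, hmin2, hdef0, hshift2x, zero_smul, sub_zero,
      ← MonoidAlgebra.single_sub]
    congr 1; ring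
  have hE2 : (MonoidAlgebra.single (SupMon.up (1 : K)) x
        - J (D (MonoidAlgebra.single (SupMon.up (1 : K)) x)))
      * (MonoidAlgebra.single (SupMon.up (2 : K)) x
        - J (D (MonoidAlgebra.single (SupMon.up (2 : K)) x)))
      = (2 : K) • MonoidAlgebra.single (SupMon.up (2 : K)) (1 : F) := by
    rw [hE2a, hE2b, MonoidAlgebra.single_mul_single, SupMon.up_mul_up, hsup12,
      MonoidAlgebra.smul_single]
    congr 1
    rw [Algebra.smul_def, mul_one, map_one, one_mul]
  refine ⟨hE1, hE2, ?_⟩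
  rw [hE1, hE2]
  intro h
  have h2 : ((4 : K) - 2) • MonoidAlgebra.single (SupMon.up (2 : K)) (1 : F) = 0 := by
    rw [sub_smul, h, sub_self]
  rw [show (4 : K) - 2 = 2 by norm_num, MonoidAlgebra.smul_single] at h2
  have h3 : (2 : K) • (1 : F) = 0 := by
    have := MonoidAlgebra.single_eq_zero.mp h2
    exact this
  rw [Algebra.smul_def, mul_one] at h3
  rw [← map_zero (algebraMap K F)] at h3
  exact two_ne_zero ((algebraMap K F).injective h3)
end

section
/- In the distribution module D(F), the F-submodule of relations Z (differentially generated by f δ_a − e_a(f) δ_a) is generated as a plain F-module by the elements f δ_a^{(k)} − Σ_{i=0}^k C(k,i)(−1)^i e_a(∂^i f) δ_a^{(k−i)} for a ∈ K, f ∈ F, k ≥ 0. In particular, for each k and f, the element f δ_a^{(k)} − Σ_{i=0}^k C(k,i)(−1)^i e_a(∂^i f) δ_a^{(k−i)} lies in Z, by the recursion ζ_{f,k} = ∂^k ζ_{f,0} − Σ_{i=0}^{k−1} C(k,i) ζ_{∂^{k−i}f, i}. -/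
set_option linter.unusedSectionVars false
set_option linter.unusedVariables false

open Finset

section Aux
variable {K F M : Type*} [Field K] [CommRing F] [Algebra K F]
    [AddCommGroup M] [Module K M] [Module F M] [IsScalarTower K F M]
    (d : F →ₗ[K] F) (e : K → F →ₐ[K] K) (δ : K → ℕ → M)

private def zeta (a : K) (f : F) (k : ℕ) : M :=
  f • δ a k - ∑ i ∈ Finset.range (k + 1),
    (((-1 : K) ^ i * (k.choose i : K)) * e a ((⇑d)^[i] f)) • δ a (k - i)

variable (D : M →ₗ[K] M)

private lemma zeta_succ
    (hDLeib : ∀ (f : F) (m : M), D (f • m) = d f • m + f • D m)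
    (hδ : ∀ (a : K) (k : ℕ), D (δ a k) = δ a (k + 1))
    (a : K) (f : F) (k : ℕ) :
    D (zeta d e δ a f k) = zeta d e δ a f (k + 1) + zeta d e δ a (d f) k := by
  have hd : ∀ i : ℕ, (⇑d)^[i] (d f) = (⇑d)^[i + 1] f := fun i =>
    (Function.iterate_succ_apply d i f).symm
  simp only [zeta, map_sub, map_sum, hDLeib, map_smul, hδ, hd]
  have hsum : ∑ i ∈ Finset.range (k + 1),
        (((-1 : K) ^ i * (k.choose i : K)) * e a ((⇑d)^[i] f)) • δ a (k - i + 1)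
      = ∑ i ∈ Finset.range (k + 1 + 1),
          (((-1 : K) ^ i * ((k + 1).choose i : K)) * e a ((⇑d)^[i] f)) • δ a (k + 1 - i)
        + ∑ i ∈ Finset.range (k + 1),
            (((-1 : K) ^ i * (k.choose i : K)) * e a ((⇑d)^[i + 1] f)) • δ a (k - i) := by
    rw [Finset.sum_range_succ'
      (fun i => (((-1 : K) ^ i * ((k + 1).choose i : K)) * e a ((⇑d)^[i] f)) • δ a (k + 1 - i))
      (k + 1)]
    rw [add_right_comm, ← Finset.sum_add_distrib]
    have hterm : ∀ i ∈ Finset.range (k + 1),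
        ((((-1 : K) ^ (i + 1) * ((k + 1).choose (i + 1) : K)) * e a ((⇑d)^[i + 1] f))
            • δ a (k + 1 - (i + 1))
          + (((-1 : K) ^ i * (k.choose i : K)) * e a ((⇑d)^[i + 1] f)) • δ a (k - i))
        = (((-1 : K) ^ (i + 1) * (k.choose (i + 1) : K)) * e a ((⇑d)^[i + 1] f)) • δ a (k - i) := by
      intro i hi
      have h1 : k + 1 - (i + 1) = k - i := by omega
      rw [h1, ← add_smul]
      congr 1
      have h2 : ((k + 1).choose (i + 1) : K) = (k.choose i : K) + (k.choose (i + 1) : K) := by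
        rw [Nat.choose_succ_succ]; push_cast; ring
      rw [h2]; ring
    rw [Finset.sum_congr rfl hterm]
    have hL : ∀ i ∈ Finset.range (k + 1),
        (((-1 : K) ^ i * (k.choose i : K)) * e a ((⇑d)^[i] f)) • δ a (k - i + 1)
        = (((-1 : K) ^ i * (k.choose i : K)) * e a ((⇑d)^[i] f)) • δ a (k + 1 - i) := by
      intro i hi
      rw [Finset.mem_range] at hi
      congr 2
      omega
    rw [Finset.sum_congr rfl hL]
    rw [Finset.sum_range_succ'
      (fun i => (((-1 : K) ^ i * (k.choose i : K)) * e a ((⇑d)^[i] f)) • δ a (k + 1 - i)) k]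
    rw [Finset.sum_range_succ
      (fun i => (((-1 : K) ^ (i + 1) * (k.choose (i + 1) : K)) * e a ((⇑d)^[i + 1] f)) • δ a (k - i)) k]
    simp [Nat.choose_succ_self]
  rw [hsum]
  abel

end Aux

section Aux2
variable {K F M : Type*} [Field K] [CommRing F] [Algebra K F]
    [AddCommGroup M] [Module K M] [Module F M] [IsScalarTower K F M]
    (d : F →ₗ[K] F) (e : K → F →ₐ[K] K) (δ : K → ℕ → M) (D : M →ₗ[K] M)

set_option linter.unusedSectionVars false

private lemma zeta_iter
    (hDLeib : ∀ (f : F) (m : M), D (f • m) = d f • m + f • D m)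
    (hδ : ∀ (a : K) (k : ℕ), D (δ a k) = δ a (k + 1))
    (a : K) (f : F) (k : ℕ) :
    (⇑D)^[k] (zeta d e δ a f 0)
      = ∑ i ∈ Finset.range (k + 1), (k.choose i : K) • zeta d e δ a ((⇑d)^[k - i] f) i := by
  induction k with
  | zero => simp
  | succ k ih =>
    rw [Function.iterate_succ_apply', ih, map_sum]
    have hstep : ∀ i ∈ Finset.range (k + 1),
        D ((k.choose i : K) • zeta d e δ a ((⇑d)^[k - i] f) i)
        = (k.choose i : K) • zeta d e δ a ((⇑d)^[k - i] f) (i + 1)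
          + (k.choose i : K) • zeta d e δ a ((⇑d)^[k - i + 1] f) i := by
      intro i hi
      rw [map_smul, zeta_succ d e δ D hDLeib hδ, smul_add, Function.iterate_succ_apply']
    rw [Finset.sum_congr rfl hstep, Finset.sum_add_distrib]
    have h1 : ∀ i ∈ Finset.range (k + 1),
        (k.choose i : K) • zeta d e δ a ((⇑d)^[k - i + 1] f) i
        = (k.choose i : K) • zeta d e δ a ((⇑d)^[k + 1 - i] f) i := by
      intro i hi
      rw [Finset.mem_range] at hi
      have : k - i + 1 = k + 1 - i := by omega
      rw [this]
    rw [Finset.sum_congr rfl h1]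
    rw [Finset.sum_range_succ'
      (fun i => ((k + 1).choose i : K) • zeta d e δ a ((⇑d)^[k + 1 - i] f) i) (k + 1)]
    have h2 : ∀ i ∈ Finset.range (k + 1),
        ((k + 1).choose (i + 1) : K) • zeta d e δ a ((⇑d)^[k + 1 - (i + 1)] f) (i + 1)
        = (k.choose i : K) • zeta d e δ a ((⇑d)^[k - i] f) (i + 1)
          + (k.choose (i + 1) : K) • zeta d e δ a ((⇑d)^[k - i] f) (i + 1) := by
      intro i hi
      have h3 : k + 1 - (i + 1) = k - i := by omega
      have h4 : ((k + 1).choose (i + 1) : K) = (k.choose i : K) + (k.choose (i + 1) : K) := by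
        rw [Nat.choose_succ_succ]; push_cast; ring
      rw [h3, h4, add_smul]
    rw [Finset.sum_congr rfl h2, Finset.sum_add_distrib]
    rw [Finset.sum_range_succ'
      (fun i => (k.choose i : K) • zeta d e δ a ((⇑d)^[k + 1 - i] f) i) k]
    rw [Finset.sum_range_succ
      (fun i => (k.choose (i + 1) : K) • zeta d e δ a ((⇑d)^[k - i] f) (i + 1)) k]
    have h5 : ∀ i ∈ Finset.range k,
        (k.choose (i + 1) : K) • zeta d e δ a ((⇑d)^[k - i] f) (i + 1)
        = (k.choose (i + 1) : K) • zeta d e δ a ((⇑d)^[k + 1 - (i + 1)] f) (i + 1) := by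
      intro i hi
      rw [Finset.mem_range] at hi
      have : k - i = k + 1 - (i + 1) := by omega
      rw [this]
    rw [Finset.sum_congr rfl h5]
    simp [Nat.choose_succ_self]
    abel

end Aux2




/-- Presentation Lemma for the distribution module: the differential `F`-submodule `Z`
(differentially generated by the sifting relations `f δ_a − e_a(f) δ_a`) is generated as a
plain `F`-module by the elements
`ζ_{f,k} = f δ_a^{(k)} − Σ_{i=0}^k C(k,i)(−1)^i e_a(∂^i f) δ_a^{(k−i)}`;
in particular each `ζ_{f,k}` lies in `Z`, via the recursion
`ζ_{f,k} = ∂^k ζ_{f,0} − Σ_{i=0}^{k−1} C(k,i) ζ_{∂^{k−i}f, i}`. -/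
theorem distribution_module_relations
    {K F M : Type*} [Field K] [CommRing F] [Algebra K F]
    [AddCommGroup M] [Module K M] [Module F M] [IsScalarTower K F M]
    (d : F →ₗ[K] F)
    (hLeib : ∀ f g : F, d (f * g) = d f * g + f * d g)
    (e : K → F →ₐ[K] K)
    (D : M →ₗ[K] M)
    (hDLeib : ∀ (f : F) (m : M), D (f • m) = d f • m + f • D m)
    (δ : K → ℕ → M)
    (hδ : ∀ (a : K) (k : ℕ), D (δ a k) = δ a (k + 1))
    (Z : Submodule F M)
    (hZgen : ∀ (a : K) (f : F), f • δ a 0 - e a f • δ a 0 ∈ Z)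
    (hZclosed : ∀ m ∈ Z, D m ∈ Z)
    (hZmin : ∀ N : Submodule F M,
      (∀ (a : K) (f : F), f • δ a 0 - e a f • δ a 0 ∈ N) →
      (∀ m ∈ N, D m ∈ N) → Z ≤ N) :
    Z = Submodule.span F { m : M | ∃ (a : K) (f : F) (k : ℕ),
        m = f • δ a k - ∑ i ∈ Finset.range (k + 1),
              (((-1 : K) ^ i * (k.choose i : K)) * e a ((⇑d)^[i] f)) • δ a (k - i) } ∧
    ∀ (a : K) (f : F) (k : ℕ),
      (f • δ a k - ∑ i ∈ Finset.range (k + 1),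
          (((-1 : K) ^ i * (k.choose i : K)) * e a ((⇑d)^[i] f)) • δ a (k - i))
        = (⇑D)^[k] (f • δ a 0 - e a f • δ a 0)
          - ∑ i ∈ Finset.range k, (k.choose i : K) •
              ((⇑d)^[k - i] f • δ a i - ∑ j ∈ Finset.range (i + 1),
                (((-1 : K) ^ j * (i.choose j : K)) * e a ((⇑d)^[j] ((⇑d)^[k - i] f)))
                  • δ a (i - j)) := by
  have hzero : ∀ (a : K) (f : F), zeta d e δ a f 0 = f • δ a 0 - e a f • δ a 0 := by
    intro a f
    simp [zeta]
  have key : ∀ (a : K) (f : F) (k : ℕ),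
      zeta d e δ a f k = (⇑D)^[k] (f • δ a 0 - e a f • δ a 0)
        - ∑ i ∈ Finset.range k, (k.choose i : K) • zeta d e δ a ((⇑d)^[k - i] f) i := by
    intro a f k
    rw [← hzero, zeta_iter d e δ D hDLeib hδ, Finset.sum_range_succ]
    simp [Nat.choose_self]
  set S : Set M := { m : M | ∃ (a : K) (f : F) (k : ℕ),
      m = f • δ a k - ∑ i ∈ Finset.range (k + 1),
            (((-1 : K) ^ i * (k.choose i : K)) * e a ((⇑d)^[i] f)) • δ a (k - i) } with hS
  have hmemS : ∀ (a : K) (f : F) (k : ℕ), zeta d e δ a f k ∈ S := by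
    intro a f k
    exact ⟨a, f, k, rfl⟩
  constructor
  · -- Z = span F S
    apply le_antisymm
    · apply hZmin
      · intro a f
        rw [← hzero]
        exact Submodule.subset_span (hmemS a f 0)
      · intro m hm
        refine Submodule.span_induction ?_ ?_ ?_ ?_ hm
        · rintro x ⟨a, f, k, rfl⟩
          show D (zeta d e δ a f k) ∈ _
          rw [zeta_succ d e δ D hDLeib hδ]
          exact add_mem (Submodule.subset_span (hmemS a f (k + 1)))
            (Submodule.subset_span (hmemS a (d f) k))
        · simp
        · intro x y hx hy hpx hpy
          rw [map_add]
          exact add_mem hpx hpy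
        · intro c x hx hpx
          rw [hDLeib c x]
          exact add_mem (Submodule.smul_mem _ _ hx) (Submodule.smul_mem _ _ hpx)
    · rw [Submodule.span_le]
      have hz : ∀ (k : ℕ) (a : K) (f : F), zeta d e δ a f k ∈ Z := by
        intro k
        induction k using Nat.strong_induction_on with
        | _ k ih =>
          intro a f
          rw [key a f k]
          apply sub_mem
          · have hiter : ∀ (n : ℕ) (m : M), m ∈ Z → (⇑D)^[n] m ∈ Z := by
              intro n
              induction n with
              | zero => intro m hm; simpa using hm
              | succ n ihn =>
                intro m hm
                rw [Function.iterate_succ_apply']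
                exact hZclosed _ (ihn m hm)
            exact hiter k _ (hZgen a f)
          · apply Submodule.sum_mem
            intro i hi
            rw [Finset.mem_range] at hi
            rw [← algebraMap_smul F ((k.choose i : K)) (zeta d e δ a ((⇑d)^[k - i] f) i)]
            exact Z.smul_mem _ (ih i hi a _)
      rintro x ⟨a, f, k, rfl⟩
      exact hz k a f
  · intro a f k
    exact key a f k
end

section
/- In a differential Rota-Baxter module (M, ∂_M, ∫_M) over an integro-differential algebra (F, ∂, ∫), constant-homogeneity of ∫_M over ker ∂ (∫_M(cφ) = c·∫_M(φ) for all c ∈ ker ∂, φ ∈ M) is equivalent to the identity ∫_M(fφ) = f·∫_M(φ) − ∫_M((∂f)·∫_M(φ)) for all f ∈ F, φ ∈ M. -/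
/-- In a differential Rota-Baxter module `(M, ∂_M, ∫_M)` over an integro-differential
algebra `(F, ∂, ∫)`, homogeneity of `∫_M` over constants `c ∈ ker ∂` is equivalent to
the identity `∫_M(fφ) = f·∫_M(φ) − ∫_M((∂f)·∫_M(φ))`. -/
theorem module_constant_homogeneity_iff
    {K F M : Type*} [CommRing K] [CommRing F] [Algebra K F]
    [AddCommGroup M] [Module K M] [Module F M] [IsScalarTower K F M]
    (d I : F →ₗ[K] F)
    (hLeib : ∀ f g : F, d (f * g) = d f * g + f * d g)
    (hsec : ∀ f : F, d (I f) = f)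
    (hstrong : ∀ f g : F, f * I g = I (f * g) + I (d f * I g))
    (D J : M →ₗ[K] M)
    (hDLeib : ∀ (f : F) (m : M), D (f • m) = d f • m + f • D m)
    (hJsec : ∀ m : M, D (J m) = m)
    (hmodRB : ∀ (f : F) (m : M), I f • J m = J (f • J m) + J (I f • m)) :
    (∀ c : F, d c = 0 → ∀ m : M, J (c • m) = c • J m) ↔
    (∀ (f : F) (m : M), J (f • m) = f • J m - J (d f • J m)) := by
  constructor
  · intro hconst f m
    have hc : d (f - I (d f)) = 0 := by simp [hsec]
    have h1 : J ((f - I (d f)) • m) = (f - I (d f)) • J m := hconst _ hc m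
    have h2 : I (d f) • J m = J (d f • J m) + J (I (d f) • m) := hmodRB (d f) m
    have hsplit : J (f • m) = J ((f - I (d f)) • m) + J (I (d f) • m) := by
      rw [← map_add]
      congr 1
      rw [← add_smul]
      ring_nf
    rw [hsplit, h1]
    have h3 : J (I (d f) • m) = I (d f) • J m - J (d f • J m) := by
      rw [h2]; abel
    rw [h3, sub_smul]
    abel
  · intro h c hc m
    have := h c m
    rw [hc, zero_smul, map_zero, sub_zero] at this
    exact this
end
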